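/- Let n ≥ 1, let k be a field, let σ ⊆ ℝ^{n+1} be the convex cone generated by the vectors (v,1) with v ∈ {0,1}^n, and let S = σ∨ ∩ ℤ^{n+1}, an additive submonoid of ℤ^{n+1}. The k-algebra homomorphism from the polynomial ring k[X_1,Y_1,…,X_n,Y_n] to the monoid algebra k[S] sending X_i to the monomial χ^{e_i} and Y_i to the monomial χ^{e_{n+1}−e_i} (for 1 ≤ i ≤ n) is surjective, and its kernel is the ideal generated by the polynomials X_iY_i − X_jY_j for 1 ≤ i < j ≤ n. Hence k[S] ≅ k[X_1,Y_1,…,X_n,Y_n]/(X_iY_i − X_jY_j : 1 ≤ i < j ≤ n). -/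

import Mathlib

open Finset

/-- The convex cone generated by a set of vectors: all finite nonnegative
linear combinations of elements of `S`. -/
def coneGen {m : ℕ} (S : Set (Fin m → ℝ)) : Set (Fin m → ℝ) :=
  {x | ∃ (k : ℕ) (c : Fin k → ℝ) (v : Fin k → Fin m → ℝ),
    (∀ i, 0 ≤ c i) ∧ (∀ i, v i ∈ S) ∧ x = ∑ i, c i • v i}

/-- The dual cone with respect to the standard inner product. -/
def dualCone {m : ℕ} (σ : Set (Fin m → ℝ)) : Set (Fin m → ℝ) :=
  {u | ∀ x ∈ σ, 0 ≤ ∑ i, u i * x i}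

/-- The vertices `(v,1)` of the unit hypercube, `v ∈ {0,1}^n`, viewed in
`ℝ^{n+1}` with last coordinate `1`. -/
def hcVerts (n : ℕ) : Set (Fin (n + 1) → ℝ) :=
  {x | x (Fin.last n) = 1 ∧ ∀ i, i ≠ Fin.last n → (x i = 0 ∨ x i = 1)}

/-- The `k`-algebra homomorphism from the polynomial ring in the variables
`X_1, Y_1, …, X_n, Y_n` (encoded as `Fin n ⊕ Fin n`) to the monoid algebra of
the lattice `ℤ^{n+1}`, sending `X_i ↦ χ^{e_i}` and `Y_i ↦ χ^{e_{n+1} − e_i}`. -/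
noncomputable def hcHom (n : ℕ) (k : Type) [Field k] :
    MvPolynomial (Fin n ⊕ Fin n) k →ₐ[k] AddMonoidAlgebra k (Fin (n + 1) → ℤ) :=
  MvPolynomial.aeval (Sum.elim
    (fun i : Fin n => AddMonoidAlgebra.single (Pi.single i.castSucc (1 : ℤ)) (1 : k))
    (fun i : Fin n => AddMonoidAlgebra.single
      (Pi.single (Fin.last n) (1 : ℤ) - Pi.single i.castSucc 1) (1 : k)))


lemma dualCone_coneGen {m : ℕ} (S : Set (Fin m → ℝ)) :
    dualCone (coneGen S) = dualCone S := by
  ext u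
  constructor
  · intro hu x hx
    exact hu x ⟨1, fun _ => 1, fun _ => x, fun _ => zero_le_one, fun _ => hx, by simp⟩
  · rintro hu x ⟨K, c, v, hc, hv, rfl⟩
    have h : ∑ i, u i * (∑ j, c j • v j) i = ∑ j, c j * ∑ i, u i * v j i := by
      simp only [Finset.sum_apply, Finset.mul_sum, Pi.smul_apply, smul_eq_mul]
      rw [Finset.sum_comm]
      apply Finset.sum_congr rfl; intro j _
      apply Finset.sum_congr rfl; intro i _
      ring
    rw [h]
    exact Finset.sum_nonneg fun j _ => mul_nonneg (hc j) (hu (v j) (hv j))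

lemma mem_dualCone_hcVerts {n : ℕ} (u : Fin (n+1) → ℝ) :
    u ∈ dualCone (hcVerts n) ↔
      ∀ A : Finset (Fin n), 0 ≤ (∑ i ∈ A, u i.castSucc) + u (Fin.last n) := by
  constructor
  · intro hu A
    set x : Fin (n+1) → ℝ := Fin.snoc (fun i => if i ∈ A then 1 else 0) 1 with hx
    have hxv : x ∈ hcVerts n := by
      constructor
      · simp [hx, Fin.snoc_last]
      · intro i hi
        obtain ⟨j, rfl⟩ := Fin.exists_castSucc_eq.mpr hi
        simp only [hx, Fin.snoc_castSucc]
        by_cases hj : j ∈ A <;> simp [hj]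
    have := hu x hxv
    rw [Fin.sum_univ_castSucc] at this
    simp only [hx, Fin.snoc_castSucc, Fin.snoc_last, mul_one, mul_ite, mul_zero] at this
    rwa [Finset.sum_ite_mem, Finset.univ_inter] at this
  · intro h x hx
    classical
    rw [Fin.sum_univ_castSucc, hx.1, mul_one]
    have hA := h (Finset.univ.filter (fun i : Fin n => x i.castSucc = 1))
    have he : ∑ i : Fin n, u i.castSucc * x i.castSucc
        = ∑ i ∈ Finset.univ.filter (fun i : Fin n => x i.castSucc = 1), u i.castSucc := by
      rw [Finset.sum_filter]
      apply Finset.sum_congr rfl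
      intro i _
      rcases hx.2 i.castSucc (Fin.castSucc_lt_last i).ne with h0 | h1
      · simp [h0]
      · simp [h1]
    rw [he]; exact hA

open MvPolynomial

namespace HCdev

def gexp (n : ℕ) : Fin n ⊕ Fin n → (Fin (n+1) → ℤ) :=
  Sum.elim (fun i => Pi.single i.castSucc 1)
    (fun i => Pi.single (Fin.last n) 1 - Pi.single i.castSucc 1)

def Wf (n : ℕ) (u : Fin n ⊕ Fin n → ℕ) : Fin (n+1) → ℤ :=
  ∑ s : Fin n ⊕ Fin n, u s • gexp n s

lemma Wf_castSucc {n : ℕ} (u : Fin n ⊕ Fin n → ℕ) (i : Fin n) :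
    Wf n u i.castSucc = (u (.inl i) : ℤ) - u (.inr i) := by
  have : Wf n u i.castSucc = ∑ s : Fin n ⊕ Fin n, u s • gexp n s i.castSucc := by
    simp [Wf]
  rw [this, Fintype.sum_sum_type]
  simp [gexp, Pi.single_apply, Fin.castSucc_inj, (Fin.castSucc_lt_last i).ne,
    Finset.sum_ite_eq', apply_ite, mul_comm]
  · omega

lemma Wf_last {n : ℕ} (u : Fin n ⊕ Fin n → ℕ) :
    Wf n u (Fin.last n) = ∑ i, (u (.inr i) : ℤ) := by
  have : Wf n u (Fin.last n) = ∑ s : Fin n ⊕ Fin n, u s • gexp n s (Fin.last n) := by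
    simp [Wf]
  rw [this, Fintype.sum_sum_type]
  simp [gexp, Pi.single_apply, (Fin.castSucc_lt_last _).ne, Finset.sum_ite_eq']
end HCdev

namespace HC2
open AddMonoidAlgebra
variable {n : ℕ} {k : Type} [Field k]

lemma prod_single' {ι G : Type*} [AddCommMonoid G] (s : Finset ι) (m : ι → G) :
    (∏ i ∈ s, (AddMonoidAlgebra.single (m i) (1:k) : AddMonoidAlgebra k G)) =
      AddMonoidAlgebra.single (∑ i ∈ s, m i) 1 := by
  induction s using Finset.cons_induction with
  | empty => simp [AddMonoidAlgebra.one_def]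
  | cons a s ha ih =>
      rw [prod_cons, ih, sum_cons, AddMonoidAlgebra.single_mul_single, one_mul]

lemma hcHom_X (s : Fin n ⊕ Fin n) :
    hcHom n k (MvPolynomial.X s) = AddMonoidAlgebra.single (HCdev.gexp n s) 1 := by
  cases s <;> simp [hcHom, HCdev.gexp]

lemma hcHom_monomial (d : Fin n ⊕ Fin n →₀ ℕ) (c : k) :
    hcHom n k (MvPolynomial.monomial d c) =
      AddMonoidAlgebra.single (HCdev.Wf n ⇑d) c := by
  have h1 : MvPolynomial.monomial d c =
      MvPolynomial.C c * ∏ s ∈ d.support, (MvPolynomial.X s) ^ (d s) := by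
    rw [MvPolynomial.monomial_eq]; rfl
  rw [h1, map_mul, map_prod]
  simp only [map_pow, hcHom_X, AddMonoidAlgebra.single_pow, one_pow]
  rw [prod_single']
  have h2 : (∑ s ∈ d.support, d s • HCdev.gexp n s) = HCdev.Wf n ⇑d := by
    rw [HCdev.Wf]
    exact Finset.sum_subset (Finset.subset_univ _)
      (fun s _ hs => by rw [Finsupp.notMem_support_iff.mp hs, zero_smul])
  rw [h2]
  have h3 : hcHom n k (MvPolynomial.C c) = AddMonoidAlgebra.single 0 c := by
    simp [hcHom, MvPolynomial.aeval_C, AddMonoidAlgebra.coe_algebraMap]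
  rw [h3, AddMonoidAlgebra.single_mul_single, zero_add, mul_one]
end HC2

namespace HCdev
variable {n : ℕ}

def Mslack (n : ℕ) (w : Fin (n+1) → ℤ) : ℤ :=
  w (Fin.last n) - ∑ i : Fin n, ((-w i.castSucc).toNat : ℤ)

lemma Mslack_def (w : Fin (n+1) → ℤ) :
    Mslack n w = w (Fin.last n) - ∑ i : Fin n, ((-w i.castSucc).toNat : ℤ) := rfl

def nf (i0 : Fin n) (w : Fin (n+1) → ℤ) : Fin n ⊕ Fin n → ℕ :=
  Sum.elim (fun i => (w i.castSucc).toNat + if i = i0 then (Mslack n w).toNat else 0)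
    (fun i => (-w i.castSucc).toNat + if i = i0 then (Mslack n w).toNat else 0)

lemma P_of_Wf (u : Fin n ⊕ Fin n → ℕ) (A : Finset (Fin n)) :
    0 ≤ (∑ i ∈ A, Wf n u i.castSucc) + Wf n u (Fin.last n) := by
  rw [Wf_last]
  rw [Finset.sum_congr rfl (fun i (_ : i ∈ A) => Wf_castSucc u i)]
  rw [Finset.sum_sub_distrib]
  have h1 : (0:ℤ) ≤ ∑ i ∈ A, (u (.inl i) : ℤ) :=
    Finset.sum_nonneg fun i _ => Int.natCast_nonneg _
  have h2 : (∑ i ∈ A, (u (.inr i) : ℤ)) ≤ ∑ i, (u (.inr i) : ℤ) :=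
    Finset.sum_le_sum_of_subset_of_nonneg (Finset.subset_univ A) (fun i _ _ => Int.natCast_nonneg _)
  linarith

lemma Mslack_nonneg (w : Fin (n+1) → ℤ)
    (hP : ∀ A : Finset (Fin n), 0 ≤ (∑ i ∈ A, w i.castSucc) + w (Fin.last n)) :
    0 ≤ Mslack n w := by
  have h := hP (Finset.univ.filter (fun i : Fin n => w i.castSucc < 0))
  rw [Finset.sum_filter] at h
  have e : ∀ i : Fin n, ((-w i.castSucc).toNat : ℤ)
      = -(if w i.castSucc < 0 then w i.castSucc else 0) := by
    intro i; split <;> omega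
  have e2 : (∑ i : Fin n, ((-w i.castSucc).toNat : ℤ))
      = -∑ i : Fin n, (if w i.castSucc < 0 then w i.castSucc else 0) := by
    rw [Finset.sum_congr rfl (fun i _ => e i), Finset.sum_neg_distrib]
  rw [Mslack_def, e2]
  linarith

lemma Wf_nf (i0 : Fin n) (w : Fin (n+1) → ℤ)
    (hM : 0 ≤ Mslack n w) : Wf n (nf i0 w) = w := by
  funext j
  refine Fin.lastCases ?_ ?_ j
  · rw [Wf_last]
    have e : ∀ i : Fin n, ((nf i0 w (.inr i) : ℕ) : ℤ)
        = ((-w i.castSucc).toNat : ℤ) + (if i = i0 then ((Mslack n w).toNat : ℤ) else 0) := by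
      intro i; simp only [nf, Sum.elim_inr]; split <;> simp
    rw [Finset.sum_congr rfl (fun i _ => e i), Finset.sum_add_distrib,
      Finset.sum_ite_eq' Finset.univ i0]
    simp only [Finset.mem_univ, if_true]
    have : (Mslack n w) = w (Fin.last n) - ∑ i : Fin n, ((-w i.castSucc).toNat : ℤ) := Mslack_def w
    omega
  · intro i
    rw [Wf_castSucc]
    simp only [nf, Sum.elim_inl, Sum.elim_inr]
    split <;> push_cast <;> omega

lemma Mslack_Wf (u : Fin n ⊕ Fin n → ℕ) :
    Mslack n (Wf n u) = ((∑ i, min (u (.inl i)) (u (.inr i)) : ℕ) : ℤ) := by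
  rw [Mslack_def, Wf_last, ← Finset.sum_sub_distrib]
  push_cast
  apply Finset.sum_congr rfl
  intro i _
  rw [Wf_castSucc]
  omega

lemma nf_eq_self (i0 : Fin n) (u : Fin n ⊕ Fin n → ℕ)
    (h : ∀ i, i ≠ i0 → min (u (.inl i)) (u (.inr i)) = 0) :
    nf i0 (Wf n u) = u := by
  have hsum : (∑ i, min (u (.inl i)) (u (.inr i)))
      = min (u (.inl i0)) (u (.inr i0)) := by
    rw [Finset.sum_eq_single_of_mem i0 (Finset.mem_univ i0)]
    intro i _ hi; exact h i hi
  have hM : (Mslack n (Wf n u)).toNat = min (u (.inl i0)) (u (.inr i0)) := by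
    rw [Mslack_Wf, Int.toNat_natCast, hsum]
  funext s
  cases s with
  | inl i =>
      simp only [nf, Sum.elim_inl, Wf_castSucc, hM]
      by_cases hi : i = i0
      · subst hi; simp only [if_true]; omega
      · simp only [hi, if_false]; have := h i hi; omega
  | inr i =>
      simp only [nf, Sum.elim_inr, Wf_castSucc, hM]
      by_cases hi : i = i0
      · subst hi; simp only [if_true]; omega
      · simp only [hi, if_false]; have := h i hi; omega

end HCdev

namespace HC2
open HCdev AddMonoidAlgebra
variable {n : ℕ} {k : Type} [Field k]

variable (k) in
noncomputable def mono (u : Fin n ⊕ Fin n → ℕ) : MvPolynomial (Fin n ⊕ Fin n) k :=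
  MvPolynomial.monomial (Finsupp.equivFunOnFinite.symm u) 1

lemma E_add (u v : Fin n ⊕ Fin n → ℕ) :
    Finsupp.equivFunOnFinite.symm (u + v)
      = Finsupp.equivFunOnFinite.symm u + Finsupp.equivFunOnFinite.symm v := by
  ext a; simp

lemma mono_add (u v : Fin n ⊕ Fin n → ℕ) :
    mono k (u + v) = mono k u * mono k v := by
  rw [mono, mono, mono, MvPolynomial.monomial_mul, one_mul, E_add]

def pair (n : ℕ) (j : Fin n) : Fin n ⊕ Fin n → ℕ :=
  fun x => if x = .inl j ∨ x = .inr j then 1 else 0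

lemma mono_pair (j : Fin n) :
    mono k (pair n j) = MvPolynomial.X (.inl j) * MvPolynomial.X (.inr j) := by
  have hE : (Finsupp.equivFunOnFinite.symm (pair n j) : Fin n ⊕ Fin n →₀ ℕ)
      = Finsupp.single (.inl j) 1 + Finsupp.single (.inr j) 1 := by
    refine Finsupp.ext fun x => ?_
    rcases x with a | a <;> rcases eq_or_ne j a with rfl | h
    · simp [pair, Finsupp.single_apply]
    · simp [pair, Finsupp.single_apply, h, h.symm]
    · simp [pair, Finsupp.single_apply]
    · simp [pair, Finsupp.single_apply, h, h.symm]
  rw [mono, hE, MvPolynomial.X, MvPolynomial.X, MvPolynomial.monomial_mul, one_mul]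

lemma Wf_add (u v : Fin n ⊕ Fin n → ℕ) : Wf n (u + v) = Wf n u + Wf n v := by
  unfold Wf
  rw [← Finset.sum_add_distrib]
  apply Finset.sum_congr rfl
  intro s _
  show ((u s + v s) • gexp n s) = _
  rw [add_nsmul]

lemma Wf_pair (j : Fin n) :
    Wf n (pair n j) = fun x => if x = Fin.last n then 1 else 0 := by
  funext x
  refine Fin.lastCases ?_ ?_ x
  · rw [Wf_last]
    simp [pair, Finset.sum_ite_eq']
  · intro i
    rw [Wf_castSucc]
    simp [pair, (Fin.castSucc_lt_last i).ne]

variable (n k) in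
noncomputable def IG : Ideal (MvPolynomial (Fin n ⊕ Fin n) k) :=
  Ideal.span {p : MvPolynomial (Fin n ⊕ Fin n) k | ∃ i j : Fin n, i < j ∧
    p = MvPolynomial.X (Sum.inl i) * MvPolynomial.X (Sum.inr i)
      - MvPolynomial.X (Sum.inl j) * MvPolynomial.X (Sum.inr j)}

lemma gen_mem {i j : Fin n} (hij : i ≠ j) :
    (MvPolynomial.X (Sum.inl i) * MvPolynomial.X (Sum.inr i)
      - MvPolynomial.X (Sum.inl j) * MvPolynomial.X (Sum.inr j)
        : MvPolynomial (Fin n ⊕ Fin n) k) ∈ IG n k := by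
  rcases lt_or_gt_of_ne hij with h | h
  · exact Ideal.subset_span ⟨i, j, h, rfl⟩
  · have : (MvPolynomial.X (Sum.inl j) * MvPolynomial.X (Sum.inr j)
        - MvPolynomial.X (Sum.inl i) * MvPolynomial.X (Sum.inr i)
          : MvPolynomial (Fin n ⊕ Fin n) k) ∈ IG n k :=
      Ideal.subset_span ⟨j, i, h, rfl⟩
    have := neg_mem this
    rwa [neg_sub] at this
  
lemma move_mem {i j : Fin n} (hij : i ≠ j) (u : Fin n ⊕ Fin n → ℕ) :
    mono k (u + pair n i) - mono k (u + pair n j) ∈ IG n k := by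
  rw [mono_add, mono_add, ← mul_sub, mono_pair, mono_pair]
  exact Ideal.mul_mem_left _ _ (gen_mem hij)

lemma key_induction (i0 : Fin n) (s : ℕ) : ∀ u : Fin n ⊕ Fin n → ℕ,
    (∑ i ∈ Finset.univ.erase i0, min (u (.inl i)) (u (.inr i))) ≤ s →
    mono k u - mono k (nf i0 (Wf n u)) ∈ IG n k := by
  have base : ∀ u : Fin n ⊕ Fin n → ℕ,
      (∀ i, i ≠ i0 → min (u (.inl i)) (u (.inr i)) = 0) →
      mono k u - mono k (nf i0 (Wf n u)) ∈ IG n k := by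
    intro u h
    rw [nf_eq_self i0 u h, sub_self]
    exact zero_mem _
  induction s with
  | zero =>
      intro u hu
      refine base u fun i hi => ?_
      have : min (u (.inl i)) (u (.inr i))
          ≤ ∑ i ∈ Finset.univ.erase i0, min (u (.inl i)) (u (.inr i)) :=
        Finset.single_le_sum (f := fun i => min (u (.inl i)) (u (.inr i))) (fun _ _ => Nat.zero_le _)
          (Finset.mem_erase.mpr ⟨hi, Finset.mem_univ i⟩)
      omega
  | succ s ih =>
      intro u hu
      by_cases hex : ∃ i, i ≠ i0 ∧ 0 < min (u (.inl i)) (u (.inr i))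
      · obtain ⟨i, hi, hpos⟩ := hex
        have hul : 1 ≤ u (.inl i) := by omega
        have hur : 1 ≤ u (.inr i) := by omega
        set u'' : Fin n ⊕ Fin n → ℕ :=
          fun x => if x = Sum.inl i ∨ x = Sum.inr i then u x - 1 else u x with hu''
        have hsplit : u = u'' + pair n i := by
          funext x
          simp only [Pi.add_apply, hu'', pair]
          by_cases hx : x = Sum.inl i ∨ x = Sum.inr i
          · rcases hx with rfl | rfl <;> simp <;> omega
          · simp [hx]
        set v : Fin n ⊕ Fin n → ℕ := u'' + pair n i0 with hv
        have hWv : Wf n v = Wf n u := by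
          rw [hv, hsplit, Wf_add, Wf_add, Wf_pair, Wf_pair]
        have hmem1 : mono k u - mono k v ∈ IG n k := by
          rw [hsplit, hv]
          exact move_mem hi u''
        have hvl : ∀ i' : Fin n, i' ≠ i0 → v (.inl i') =
            if i' = i then u (.inl i') - 1 else u (.inl i') := by
          intro i' hi'
          simp only [hv, hu'', Pi.add_apply, pair]
          by_cases h : i' = i <;> simp [h, hi', hi]
        have hvr : ∀ i' : Fin n, i' ≠ i0 → v (.inr i') =
            if i' = i then u (.inr i') - 1 else u (.inr i') := by
          intro i' hi'
          simp only [hv, hu'', Pi.add_apply, pair]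
          by_cases h : i' = i <;> simp [h, hi', hi]
        have hmeas : (∑ i' ∈ Finset.univ.erase i0, min (v (.inl i')) (v (.inr i')))
            < ∑ i' ∈ Finset.univ.erase i0, min (u (.inl i')) (u (.inr i')) := by
          apply Finset.sum_lt_sum
          · intro i' hi'
            have hi'0 : i' ≠ i0 := (Finset.mem_erase.mp hi').1
            rw [hvl i' hi'0, hvr i' hi'0]
            by_cases h : i' = i <;> simp [h] <;> omega
          · refine ⟨i, Finset.mem_erase.mpr ⟨hi, Finset.mem_univ i⟩, ?_⟩
            rw [hvl i hi, hvr i hi]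
            simp; omega
        have hmem2 : mono k v - mono k (nf i0 (Wf n v)) ∈ IG n k :=
          ih v (by omega)
        have := add_mem hmem1 hmem2
        rw [hWv] at this
        simpa using this
      · push_neg at hex
        exact base u fun i hi => by have := hex i hi; omega

lemma hcHom_eq_sum (p : MvPolynomial (Fin n ⊕ Fin n) k) :
    hcHom n k p = ∑ d ∈ p.support,
      AddMonoidAlgebra.single (Wf n ⇑d) (MvPolynomial.coeff d p) := by
  conv_lhs => rw [p.as_sum]
  rw [map_sum]
  exact Finset.sum_congr rfl fun d _ => hcHom_monomial d _

lemma mem_range_iff (f : AddMonoidAlgebra k (Fin (n + 1) → ℤ)) :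
    f ∈ Set.range (hcHom n k) ↔ ∀ w ∈ f.coeff.support, ∃ u, Wf n u = w := by
  constructor
  · rintro ⟨p, rfl⟩ w hw
    rw [hcHom_eq_sum, AddMonoidAlgebra.coeff_sum] at hw
    obtain ⟨d, _, hd⟩ := Finsupp.mem_support_finset_sum w hw
    rw [AddMonoidAlgebra.coeff_single] at hd
    refine ⟨⇑d, ?_⟩
    have := Finsupp.support_single_subset hd
    simp only [Finset.mem_singleton] at this
    exact this.symm
  · intro h
    choose uu huu using h
    classical
    refine ⟨∑ w ∈ f.coeff.support.attach,
      MvPolynomial.monomial (Finsupp.equivFunOnFinite.symm (uu w w.2)) (f.coeff w), ?_⟩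
    rw [map_sum]
    have e : ∀ w : f.coeff.support, hcHom n k (MvPolynomial.monomial
        (Finsupp.equivFunOnFinite.symm (uu w w.2)) (f.coeff w))
        = AddMonoidAlgebra.single (w : Fin (n+1) → ℤ) (f.coeff w) := by
      intro w
      rw [hcHom_monomial]
      have hc : ⇑(Finsupp.equivFunOnFinite.symm (uu w w.2)) = uu w w.2 := rfl
      rw [hc, huu w w.2]
    rw [Finset.sum_congr rfl fun w _ => e w]
    rw [Finset.sum_attach f.coeff.support (fun w => AddMonoidAlgebra.single w (f.coeff w))]
    exact AddMonoidAlgebra.sum_coeff_single f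

lemma ker_sub (hn : 1 ≤ n) : RingHom.ker (hcHom n k).toRingHom ≤ IG n k := by
  intro p hp
  have hp0 : hcHom n k p = 0 := hp
  set i0 : Fin n := ⟨0, hn⟩
  set F : (Fin (n+1) → ℤ) → (Fin n ⊕ Fin n →₀ ℕ) :=
    fun w => Finsupp.equivFunOnFinite.symm (nf i0 w) with hF
  set q : MvPolynomial (Fin n ⊕ Fin n) k :=
    ∑ d ∈ p.support, MvPolynomial.monomial (F (Wf n ⇑d)) (MvPolynomial.coeff d p) with hq
  have hq0 : q = 0 := by
    have : q = AddMonoidAlgebra.mapDomain F (hcHom n k p) := by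
      rw [hcHom_eq_sum, AddMonoidAlgebra.mapDomain, AddMonoidAlgebra.coeff_sum,
        Finsupp.mapDomain_finset_sum, AddMonoidAlgebra.ofCoeff_sum]
      exact Finset.sum_congr rfl fun d _ => by
        rw [AddMonoidAlgebra.coeff_single, Finsupp.mapDomain_single,
          AddMonoidAlgebra.ofCoeff_single, MvPolynomial.single_eq_monomial]
    rw [this, hp0, AddMonoidAlgebra.mapDomain_zero]
  have h2 : p - q = ∑ d ∈ p.support, (MvPolynomial.monomial d (MvPolynomial.coeff d p)
      - MvPolynomial.monomial (F (Wf n ⇑d)) (MvPolynomial.coeff d p)) := by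
    rw [Finset.sum_sub_distrib, hq, ← p.as_sum]
  have h3 : p - q ∈ IG n k := by
    rw [h2]
    refine Ideal.sum_mem _ fun d _ => ?_
    have e : MvPolynomial.monomial d (MvPolynomial.coeff d p)
        - MvPolynomial.monomial (F (Wf n ⇑d)) (MvPolynomial.coeff d p)
        = MvPolynomial.C (MvPolynomial.coeff d p)
          * (mono k ⇑d - mono k (nf i0 (Wf n ⇑d))) := by
      simp only [mul_sub, mono, MvPolynomial.C_mul_monomial, mul_one, hF,
        Finsupp.equivFunOnFinite_symm_coe]
    rw [e]
    exact Ideal.mul_mem_left _ _ (key_induction i0 _ ⇑d le_rfl)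
  rwa [hq0, sub_zero] at h3

lemma gexp_pair_sum (i : Fin n) :
    gexp n (.inl i) + gexp n (.inr i) = Pi.single (Fin.last n) 1 := by
  show Pi.single i.castSucc 1 + (Pi.single (Fin.last n) 1 - Pi.single i.castSucc 1) = _
  abel

lemma sub_ker (hn : 1 ≤ n) : IG n k ≤ RingHom.ker (hcHom n k).toRingHom := by
  rw [IG, Ideal.span_le]
  rintro p ⟨i, j, hij, rfl⟩
  have e : ∀ i : Fin n, hcHom n k (MvPolynomial.X (Sum.inl i) * MvPolynomial.X (Sum.inr i))
      = AddMonoidAlgebra.single (Pi.single (Fin.last n) 1) 1 := by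
    intro i
    rw [map_mul, hcHom_X, hcHom_X, AddMonoidAlgebra.single_mul_single, one_mul,
      gexp_pair_sum]
  show hcHom n k _ = 0
  rw [map_sub, e i, e j, sub_self]

end HC2

namespace HC2
open HCdev
variable {n : ℕ} {k : Type} [Field k]

lemma dual_iff (w : Fin (n+1) → ℤ) :
    ((fun i => (w i : ℝ)) ∈ dualCone (coneGen (hcVerts n))) ↔
      ∀ A : Finset (Fin n), 0 ≤ (∑ i ∈ A, w i.castSucc) + w (Fin.last n) := by
  rw [dualCone_coneGen, mem_dualCone_hcVerts]
  refine forall_congr' fun A => ?_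
  constructor
  · intro h; exact_mod_cast h
  · intro h; exact_mod_cast h

end HC2

theorem hypercube_semigroup_algebra_presentation (n : ℕ) (hn : 1 ≤ n)
    (k : Type) [Field k] :
    (∀ f : AddMonoidAlgebra k (Fin (n + 1) → ℤ),
      f ∈ Set.range (hcHom n k) ↔
        ∀ w ∈ Finsupp.support f.coeff,
          (fun i => (w i : ℝ)) ∈ dualCone (coneGen (hcVerts n))) ∧
    RingHom.ker (hcHom n k).toRingHom = Ideal.span
      {p : MvPolynomial (Fin n ⊕ Fin n) k | ∃ i j : Fin n, i < j ∧
        p = MvPolynomial.X (Sum.inl i) * MvPolynomial.X (Sum.inr i)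
          - MvPolynomial.X (Sum.inl j) * MvPolynomial.X (Sum.inr j)} := by
  constructor
  · intro f
    rw [HC2.mem_range_iff]
    constructor
    · intro h w hw
      rw [HC2.dual_iff]
      obtain ⟨u, rfl⟩ := h w hw
      exact fun A => HCdev.P_of_Wf u A
    · intro h w hw
      have hP := (HC2.dual_iff w).mp (h w hw)
      exact ⟨HCdev.nf ⟨0, hn⟩ w, HCdev.Wf_nf _ w (HCdev.Mslack_nonneg w hP)⟩
  · exact le_antisymm (HC2.ker_sub hn) (HC2.sub_ker hn)
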